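/- arXiv:1601.02330 — 3 statements merged into one kernel-verified Lean document; each statement's English description precedes it below -/
import Mathlib

section
/- Let k be a positive integer with k ≡ 4 (mod 8). Then the number of quadruples (a,b,c,d) of positive integers with d odd satisfying (2a+2b+2c+d)² + (2b+2c+d)² + (2c+d)² + d² = k is equal to L₄(k) − L₄(k/4). -/
noncomputable def L4 (k : ℕ) : ℕ := {q : ℕ × ℕ × ℕ × ℕ | 0 < q.1 ∧ q.1 < q.2.1 ∧ q.2.1 < q.2.2.1 ∧ q.2.2.1 < q.2.2.2 ∧ q.1 ^ 2 + q.2.1 ^ 2 + q.2.2.1 ^ 2 + q.2.2.2 ^ 2 = k}.ncard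

namespace Stmt15Aux

def T (k : ℕ) : Set (ℕ × ℕ × ℕ × ℕ) :=
  {q | 0 < q.1 ∧ q.1 < q.2.1 ∧ q.2.1 < q.2.2.1 ∧ q.2.2.1 < q.2.2.2 ∧
    q.1 ^ 2 + q.2.1 ^ 2 + q.2.2.1 ^ 2 + q.2.2.2 ^ 2 = k}

def S (k : ℕ) : Set (ℕ × ℕ × ℕ × ℕ) :=
  {q | 0 < q.1 ∧ 0 < q.2.1 ∧ 0 < q.2.2.1 ∧ 0 < q.2.2.2 ∧ Odd q.2.2.2 ∧
      (2 * q.1 + 2 * q.2.1 + 2 * q.2.2.1 + q.2.2.2) ^ 2 + (2 * q.2.1 + 2 * q.2.2.1 + q.2.2.2) ^ 2 +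
        (2 * q.2.2.1 + q.2.2.2) ^ 2 + q.2.2.2 ^ 2 = k}

lemma mem_T {k x y z v : ℕ} : ((x, y, z, v) : ℕ × ℕ × ℕ × ℕ) ∈ T k ↔
    (0 < x ∧ x < y ∧ y < z ∧ z < v ∧ x ^ 2 + y ^ 2 + z ^ 2 + v ^ 2 = k) := Iff.rfl

lemma mem_S {k a b c d : ℕ} : ((a, b, c, d) : ℕ × ℕ × ℕ × ℕ) ∈ S k ↔
    (0 < a ∧ 0 < b ∧ 0 < c ∧ 0 < d ∧ Odd d ∧
      (2 * a + 2 * b + 2 * c + d) ^ 2 + (2 * b + 2 * c + d) ^ 2 + (2 * c + d) ^ 2 + d ^ 2 = k) :=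
  Iff.rfl

lemma sq_mod4 (x : ℕ) : x ^ 2 % 4 = x % 2 := by
  rcases Nat.even_or_odd x with ⟨m, rfl⟩ | ⟨m, rfl⟩
  · obtain ⟨t, ht⟩ : ∃ t, (m + m) ^ 2 = 4 * t := ⟨m * m, by ring⟩
    omega
  · obtain ⟨t, ht⟩ : ∃ t, (2 * m + 1) ^ 2 = 4 * t + 1 := ⟨m * m + m, by ring⟩
    omega

lemma parity {k a b c d : ℕ} (hk : k % 4 = 0) (h : a ^ 2 + b ^ 2 + c ^ 2 + d ^ 2 = k) :
    (a % 2 = 1 ∧ b % 2 = 1 ∧ c % 2 = 1 ∧ d % 2 = 1) ∨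
    (a % 2 = 0 ∧ b % 2 = 0 ∧ c % 2 = 0 ∧ d % 2 = 0) := by
  have ha := sq_mod4 a; have hb := sq_mod4 b; have hc := sq_mod4 c; have hd := sq_mod4 d
  omega

lemma T_finite (k : ℕ) : (T k).Finite := by
  apply Set.Finite.subset (Set.finite_Icc ((0,0,0,0) : ℕ × ℕ × ℕ × ℕ) (k,k,k,k))
  rintro ⟨a, b, c, d⟩ hq
  rw [mem_T] at hq
  obtain ⟨h1, h2, h3, h4, h5⟩ := hq
  have ha : a ≤ a ^ 2 := Nat.le_self_pow two_ne_zero a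
  have hb : b ≤ b ^ 2 := Nat.le_self_pow two_ne_zero b
  have hc : c ≤ c ^ 2 := Nat.le_self_pow two_ne_zero c
  have hd : d ≤ d ^ 2 := Nat.le_self_pow two_ne_zero d
  simp only [Set.mem_Icc, Prod.le_def, Prod.fst, Prod.snd]
  exact ⟨⟨by omega, by omega, by omega, by omega⟩, by omega, by omega, by omega, by omega⟩

def f : ℕ × ℕ × ℕ × ℕ → ℕ × ℕ × ℕ × ℕ :=
  fun q => (q.2.2.2, 2 * q.2.2.1 + q.2.2.2, 2 * q.2.1 + 2 * q.2.2.1 + q.2.2.2,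
            2 * q.1 + 2 * q.2.1 + 2 * q.2.2.1 + q.2.2.2)

lemma f_apply (a b c d : ℕ) :
    f (a, b, c, d) = (d, 2 * c + d, 2 * b + 2 * c + d, 2 * a + 2 * b + 2 * c + d) := rfl

lemma f_inj : Function.Injective f := by
  rintro ⟨a, b, c, d⟩ ⟨a', b', c', d'⟩ h
  rw [f_apply, f_apply, Prod.mk.injEq, Prod.mk.injEq, Prod.mk.injEq] at h
  simp only [Prod.mk.injEq]
  omega

def g : ℕ × ℕ × ℕ × ℕ → ℕ × ℕ × ℕ × ℕ :=
  fun q => (2 * q.1, 2 * q.2.1, 2 * q.2.2.1, 2 * q.2.2.2)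

lemma g_apply (a b c d : ℕ) : g (a, b, c, d) = (2 * a, 2 * b, 2 * c, 2 * d) := rfl

lemma g_inj : Function.Injective g := by
  rintro ⟨a, b, c, d⟩ ⟨a', b', c', d'⟩ h
  rw [g_apply, g_apply, Prod.mk.injEq, Prod.mk.injEq, Prod.mk.injEq] at h
  simp only [Prod.mk.injEq]
  omega

lemma A_eq {k : ℕ} (hk : k % 4 = 0) :
    {q ∈ T k | q.2.2.2 % 2 = 1} = f '' S k := by
  ext ⟨x, y, z, v⟩
  simp only [Set.mem_setOf_eq, mem_T, Set.mem_image]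
  constructor
  · rintro ⟨⟨h1, h2, h3, h4, h5⟩, hv⟩
    have hv' : v % 2 = 1 := hv
    have hpar := parity hk h5
    have hall : x % 2 = 1 ∧ y % 2 = 1 ∧ z % 2 = 1 ∧ v % 2 = 1 := by omega
    refine ⟨((v - z) / 2, (z - y) / 2, (y - x) / 2, x), mem_S.mpr
      ⟨by omega, by omega, by omega, by omega, Nat.odd_iff.mpr hall.1, ?_⟩, ?_⟩
    · have e4 : 2 * ((v - z) / 2) + 2 * ((z - y) / 2) + 2 * ((y - x) / 2) + x = v := by omega
      have e3 : 2 * ((z - y) / 2) + 2 * ((y - x) / 2) + x = z := by omega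
      have e2 : 2 * ((y - x) / 2) + x = y := by omega
      rw [e4, e3, e2]
      omega
    · rw [f_apply, Prod.mk.injEq, Prod.mk.injEq, Prod.mk.injEq]
      refine ⟨rfl, by omega, by omega, by omega⟩
  · rintro ⟨⟨a, b, c, d⟩, hmem, heq⟩
    rw [mem_S] at hmem
    obtain ⟨h1, h2, h3, h4, h5, h6⟩ := hmem
    rw [f_apply, Prod.mk.injEq, Prod.mk.injEq, Prod.mk.injEq] at heq
    obtain ⟨e1, e2, e3, e4⟩ := heq
    have hd : d % 2 = 1 := Nat.odd_iff.mp h5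
    refine ⟨⟨by omega, by omega, by omega, by omega, ?_⟩, ?_⟩
    · rw [← e1, ← e2, ← e3, ← e4]; omega
    · show v % 2 = 1; omega

lemma E_eq {k : ℕ} (hk : k % 4 = 0) :
    {q ∈ T k | q.2.2.2 % 2 = 0} = g '' T (k / 4) := by
  ext ⟨x, y, z, v⟩
  simp only [Set.mem_setOf_eq, mem_T, Set.mem_image]
  constructor
  · rintro ⟨⟨h1, h2, h3, h4, h5⟩, hv⟩
    have hv' : v % 2 = 0 := hv
    have hpar := parity hk h5
    have hall : x % 2 = 0 ∧ y % 2 = 0 ∧ z % 2 = 0 ∧ v % 2 = 0 := by omega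
    obtain ⟨X, hX⟩ : ∃ X, x = 2 * X := ⟨x / 2, by omega⟩
    obtain ⟨Y, hY⟩ : ∃ Y, y = 2 * Y := ⟨y / 2, by omega⟩
    obtain ⟨Z, hZ⟩ : ∃ Z, z = 2 * Z := ⟨z / 2, by omega⟩
    obtain ⟨V, hV⟩ : ∃ V, v = 2 * V := ⟨v / 2, by omega⟩
    subst hX hY hZ hV
    have expand : (2 * X) ^ 2 + (2 * Y) ^ 2 + (2 * Z) ^ 2 + (2 * V) ^ 2 =
        4 * (X ^ 2 + Y ^ 2 + Z ^ 2 + V ^ 2) := by ring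
    refine ⟨(X, Y, Z, V), mem_T.mpr ⟨by omega, by omega, by omega, by omega, by omega⟩,
      (g_apply X Y Z V).symm ▸ rfl⟩
  · rintro ⟨⟨X, Y, Z, V⟩, hmem, heq⟩
    rw [mem_T] at hmem
    obtain ⟨h1, h2, h3, h4, h5⟩ := hmem
    rw [g_apply, Prod.mk.injEq, Prod.mk.injEq, Prod.mk.injEq] at heq
    obtain ⟨e1, e2, e3, e4⟩ := heq
    subst e1 e2 e3 e4
    have expand : (2 * X) ^ 2 + (2 * Y) ^ 2 + (2 * Z) ^ 2 + (2 * V) ^ 2 =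
        4 * (X ^ 2 + Y ^ 2 + Z ^ 2 + V ^ 2) := by ring
    exact ⟨⟨by omega, by omega, by omega, by omega, by omega⟩, by omega⟩

end Stmt15Aux

open Stmt15Aux in
theorem stmt15 (k : ℕ) (hk : 0 < k) (h : k % 8 = 4) :
    ({q : ℕ × ℕ × ℕ × ℕ | 0 < q.1 ∧ 0 < q.2.1 ∧ 0 < q.2.2.1 ∧ 0 < q.2.2.2 ∧ Odd q.2.2.2 ∧
      (2 * q.1 + 2 * q.2.1 + 2 * q.2.2.1 + q.2.2.2) ^ 2 + (2 * q.2.1 + 2 * q.2.2.1 + q.2.2.2) ^ 2 +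
        (2 * q.2.2.1 + q.2.2.2) ^ 2 + q.2.2.2 ^ 2 = k}.ncard : ℤ) = L4 k - L4 (k / 4) := by
  have hk4 : k % 4 = 0 := by omega
  have hA := A_eq (k := k) hk4
  have hE := E_eq (k := k) hk4
  have hsplit : T k = {q ∈ T k | q.2.2.2 % 2 = 1} ∪ {q ∈ T k | q.2.2.2 % 2 = 0} := by
    ext q
    constructor
    · intro hq
      by_cases h2 : q.2.2.2 % 2 = 1
      · exact Or.inl ⟨hq, h2⟩
      · exact Or.inr ⟨hq, by omega⟩
    · rintro (⟨hq, _⟩ | ⟨hq, _⟩) <;> exact hq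
  have hdisj : Disjoint {q ∈ T k | q.2.2.2 % 2 = 1} {q ∈ T k | q.2.2.2 % 2 = 0} :=
    Set.disjoint_left.mpr (by rintro q ⟨_, h1⟩ ⟨_, h0⟩; omega)
  have hL4k : L4 k = ({q ∈ T k | q.2.2.2 % 2 = 1}).ncard + ({q ∈ T k | q.2.2.2 % 2 = 0}).ncard := by
    have h0 : L4 k = (T k).ncard := rfl
    rw [h0]
    conv_lhs => rw [hsplit]
    exact Set.ncard_union_eq hdisj
      ((T_finite k).subset (fun q hq => hq.1)) ((T_finite k).subset (fun q hq => hq.1))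
  have hAcard : ({q ∈ T k | q.2.2.2 % 2 = 1}).ncard = (S k).ncard := by
    rw [hA, Set.ncard_image_of_injective _ f_inj]
  have hEcard : ({q ∈ T k | q.2.2.2 % 2 = 0}).ncard = L4 (k / 4) := by
    rw [hE, Set.ncard_image_of_injective _ g_inj]; rfl
  show ((S k).ncard : ℤ) = (L4 k : ℤ) - (L4 (k / 4) : ℤ)
  rw [hL4k, hAcard, hEcard]
  push_cast
  ring
end

section
/- Let k be a positive integer divisible by 4. Then the number of quadruples (a,b,c,d) of positive integers with d even satisfying (2a+2b+2c+d)² + (2b+2c+d)² + (2c+d)² + d² = k is equal to L₄(k/4). -/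
theorem stmt16 (k : ℕ) (hk : 0 < k) (h : 4 ∣ k) :
    {q : ℕ × ℕ × ℕ × ℕ | 0 < q.1 ∧ 0 < q.2.1 ∧ 0 < q.2.2.1 ∧ 0 < q.2.2.2 ∧ Even q.2.2.2 ∧
      (2 * q.1 + 2 * q.2.1 + 2 * q.2.2.1 + q.2.2.2) ^ 2 + (2 * q.2.1 + 2 * q.2.2.1 + q.2.2.2) ^ 2 +
        (2 * q.2.2.1 + q.2.2.2) ^ 2 + q.2.2.2 ^ 2 = k}.ncard = L4 (k / 4) := by
  obtain ⟨m, rfl⟩ := h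
  rw [Nat.mul_div_cancel_left m (by norm_num)]
  unfold L4
  set f : ℕ × ℕ × ℕ × ℕ → ℕ × ℕ × ℕ × ℕ := fun q =>
    (q.2.2.2 / 2, q.2.2.1 + q.2.2.2 / 2, q.2.1 + q.2.2.1 + q.2.2.2 / 2,
      q.1 + q.2.1 + q.2.2.1 + q.2.2.2 / 2) with hf
  set S : Set (ℕ × ℕ × ℕ × ℕ) := {q : ℕ × ℕ × ℕ × ℕ | 0 < q.1 ∧ 0 < q.2.1 ∧ 0 < q.2.2.1 ∧ 0 < q.2.2.2 ∧ Even q.2.2.2 ∧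
      (2 * q.1 + 2 * q.2.1 + 2 * q.2.2.1 + q.2.2.2) ^ 2 + (2 * q.2.1 + 2 * q.2.2.1 + q.2.2.2) ^ 2 +
        (2 * q.2.2.1 + q.2.2.2) ^ 2 + q.2.2.2 ^ 2 = 4 * m} with hS
  have hinj : Set.InjOn f S := by
    rintro ⟨a, b, c, d⟩ h1 ⟨a', b', c', d'⟩ h2 heq
    simp only [hS, Set.mem_setOf_eq] at h1 h2
    obtain ⟨_, _, _, _, ⟨e, he⟩, _⟩ := h1
    obtain ⟨_, _, _, _, ⟨e', he'⟩, _⟩ := h2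
    simp only [hf, Prod.mk.injEq, Prod.ext_iff] at heq ⊢
    omega
  have himg : f '' S = {q : ℕ × ℕ × ℕ × ℕ | 0 < q.1 ∧ q.1 < q.2.1 ∧ q.2.1 < q.2.2.1 ∧
      q.2.2.1 < q.2.2.2 ∧ q.1 ^ 2 + q.2.1 ^ 2 + q.2.2.1 ^ 2 + q.2.2.2 ^ 2 = m} := by
    ext ⟨x, y, z, v⟩
    simp only [Set.mem_image, Set.mem_setOf_eq]
    constructor
    · rintro ⟨⟨a, b, c, d⟩, hmem, heq⟩
      simp only [hS, Set.mem_setOf_eq] at hmem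
      obtain ⟨ha, hb, hc, hd, ⟨e, he⟩, hsum⟩ := hmem
      subst he
      have h2 : (e + e) / 2 = e := by omega
      simp only [hf, h2, Prod.mk.injEq] at heq
      obtain ⟨rfl, rfl, rfl, rfl⟩ := heq
      have h4 : 4 * (e ^ 2 + (c + e) ^ 2 + (b + c + e) ^ 2 + (a + b + c + e) ^ 2) = 4 * m := by
        rw [← hsum]; ring
      exact ⟨by omega, by omega, by omega, by omega, by omega⟩
    · rintro ⟨hx, hxy, hyz, hzv, hsum⟩
      obtain ⟨p, hp⟩ : ∃ p, y = x + p + 1 := ⟨y - x - 1, by omega⟩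
      obtain ⟨q, hq⟩ : ∃ q, z = y + q + 1 := ⟨z - y - 1, by omega⟩
      obtain ⟨r, hr⟩ : ∃ r, v = z + r + 1 := ⟨v - z - 1, by omega⟩
      refine ⟨(r + 1, q + 1, p + 1, 2 * x), ?_, ?_⟩
      · simp only [hS, Set.mem_setOf_eq]
        refine ⟨by omega, by omega, by omega, by omega, ⟨x, by ring⟩, ?_⟩
        have key : (2 * (r + 1) + 2 * (q + 1) + 2 * (p + 1) + 2 * x) ^ 2 +
            (2 * (q + 1) + 2 * (p + 1) + 2 * x) ^ 2 + (2 * (p + 1) + 2 * x) ^ 2 + (2 * x) ^ 2 =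
            4 * (x ^ 2 + y ^ 2 + z ^ 2 + v ^ 2) := by
          subst hp hq hr; ring
        rw [key, hsum]
      · simp only [hf, Prod.mk.injEq]
        omega
  rw [← himg, Set.ncard_image_of_injOn hinj]
end

section
/- Let k be a positive integer divisible by 4. Then the number of quadruples (a,b,c,d) of positive integers with c ≠ d and c ≡ d (mod 2) satisfying (2a+2b+c+d)² + (2b+c+d)² + (c+d)² + (c−d)² = k is equal to 2·L₄(k/4). -/
def L4set (m : ℕ) : Set (ℕ × ℕ × ℕ × ℕ) :=
  {q : ℕ × ℕ × ℕ × ℕ | 0 < q.1 ∧ q.1 < q.2.1 ∧ q.2.1 < q.2.2.1 ∧ q.2.2.1 < q.2.2.2 ∧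
    q.1 ^ 2 + q.2.1 ^ 2 + q.2.2.1 ^ 2 + q.2.2.2 ^ 2 = m}

lemma L4set_mem (m x y z v : ℕ) : (x, y, z, v) ∈ L4set m ↔
    (0 < x ∧ x < y ∧ y < z ∧ z < v ∧ x ^ 2 + y ^ 2 + z ^ 2 + v ^ 2 = m) := Iff.rfl

def phi1 (q : ℕ × ℕ × ℕ × ℕ) : ℕ × ℕ × ℕ × ℕ :=
  (q.2.2.2 - q.2.2.1, q.2.2.1 - q.2.1, q.2.1 + q.1, q.2.1 - q.1)

def phi2 (q : ℕ × ℕ × ℕ × ℕ) : ℕ × ℕ × ℕ × ℕ :=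
  (q.2.2.2 - q.2.2.1, q.2.2.1 - q.2.1, q.2.1 - q.1, q.2.1 + q.1)

lemma phi1_mk (x y z v : ℕ) : phi1 (x, y, z, v) = (v - z, z - y, y + x, y - x) := rfl

lemma phi2_mk (x y z v : ℕ) : phi2 (x, y, z, v) = (v - z, z - y, y - x, y + x) := rfl

theorem stmt18 (k : ℕ) (hk : 0 < k) (h : 4 ∣ k) :
    {q : ℕ × ℕ × ℕ × ℕ | 0 < q.1 ∧ 0 < q.2.1 ∧ 0 < q.2.2.1 ∧ 0 < q.2.2.2 ∧
      q.2.2.1 ≠ q.2.2.2 ∧ q.2.2.1 % 2 = q.2.2.2 % 2 ∧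
      ((2 * q.1 + 2 * q.2.1 + q.2.2.1 + q.2.2.2 : ℤ)) ^ 2 +
        ((2 * q.2.1 + q.2.2.1 + q.2.2.2 : ℤ)) ^ 2 +
        ((q.2.2.1 + q.2.2.2 : ℤ)) ^ 2 + ((q.2.2.1 : ℤ) - (q.2.2.2 : ℤ)) ^ 2 = (k : ℤ)}.ncard
      = 2 * L4 (k / 4) := by
  classical
  obtain ⟨m, rfl⟩ := h
  have hk4 : 4 * m / 4 = m := by omega
  rw [hk4, show L4 m = (L4set m).ncard from rfl]
  have hSfin : (L4set m).Finite := by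
    apply Set.Finite.subset (Set.finite_Iic ((m, m, m, m) : ℕ × ℕ × ℕ × ℕ))
    rintro ⟨x, y, z, v⟩ hq
    rw [L4set_mem] at hq
    obtain ⟨-, -, -, -, he⟩ := hq
    simp only [Set.mem_Iic, Prod.mk_le_mk]
    refine ⟨?_, ?_, ?_, ?_⟩ <;>
      nlinarith [Nat.le_self_pow two_ne_zero x, Nat.le_self_pow two_ne_zero y,
        Nat.le_self_pow two_ne_zero z, Nat.le_self_pow two_ne_zero v]
  have hm4 : ((4 * m : ℕ) : ℤ) = 4 * (m : ℤ) := by push_cast; ring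
  have himg : {q : ℕ × ℕ × ℕ × ℕ | 0 < q.1 ∧ 0 < q.2.1 ∧ 0 < q.2.2.1 ∧ 0 < q.2.2.2 ∧
      q.2.2.1 ≠ q.2.2.2 ∧ q.2.2.1 % 2 = q.2.2.2 % 2 ∧
      ((2 * q.1 + 2 * q.2.1 + q.2.2.1 + q.2.2.2 : ℤ)) ^ 2 +
        ((2 * q.2.1 + q.2.2.1 + q.2.2.2 : ℤ)) ^ 2 +
        ((q.2.2.1 + q.2.2.2 : ℤ)) ^ 2 + ((q.2.2.1 : ℤ) - (q.2.2.2 : ℤ)) ^ 2 = ((4 * m : ℕ) : ℤ)}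
      = phi1 '' L4set m ∪ phi2 '' L4set m := by
    ext ⟨a, b, c, d⟩
    simp only [Set.mem_setOf_eq, Set.mem_union, Set.mem_image]
    constructor
    · rintro ⟨ha, hb, hc, hd, hne, hpar, heq⟩
      rw [hm4] at heq
      rcases hne.lt_or_gt with hlt | hlt
      · -- c < d, use phi2
        right
        refine ⟨((d - c) / 2, (c + d) / 2, (c + d) / 2 + b, (c + d) / 2 + b + a), ?_, ?_⟩
        · rw [L4set_mem]
          refine ⟨by omega, by omega, by omega, by omega, ?_⟩
          have hcz : (c : ℤ) = (((c + d) / 2 : ℕ) : ℤ) - (((d - c) / 2 : ℕ) : ℤ) := by omega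
          have hdz : (d : ℤ) = (((c + d) / 2 : ℕ) : ℤ) + (((d - c) / 2 : ℕ) : ℤ) := by omega
          rw [hcz, hdz] at heq
          have h4 : 4 * ((((d - c) / 2 : ℕ) : ℤ) ^ 2 + (((c + d) / 2 : ℕ) : ℤ) ^ 2 +
              ((((c + d) / 2 : ℕ) : ℤ) + (b : ℤ)) ^ 2 +
              ((((c + d) / 2 : ℕ) : ℤ) + (b : ℤ) + (a : ℤ)) ^ 2) = 4 * (m : ℤ) := by
            linear_combination heq
          have h5 : 4 * (((d - c) / 2) ^ 2 + ((c + d) / 2) ^ 2 + ((c + d) / 2 + b) ^ 2 +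
              ((c + d) / 2 + b + a) ^ 2) = 4 * m := by exact_mod_cast h4
          exact Nat.eq_of_mul_eq_mul_left (by norm_num) h5
        · have e1 : (c + d) / 2 + b + a - ((c + d) / 2 + b) = a := by omega
          have e2 : (c + d) / 2 + b - (c + d) / 2 = b := by omega
          have e3 : (c + d) / 2 - (d - c) / 2 = c := by omega
          have e4 : (c + d) / 2 + (d - c) / 2 = d := by omega
          rw [phi2_mk, e1, e2, e3, e4]
      · -- d < c, use phi1
        left
        refine ⟨((c - d) / 2, (c + d) / 2, (c + d) / 2 + b, (c + d) / 2 + b + a), ?_, ?_⟩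
        · rw [L4set_mem]
          refine ⟨by omega, by omega, by omega, by omega, ?_⟩
          have hcz : (c : ℤ) = (((c + d) / 2 : ℕ) : ℤ) + (((c - d) / 2 : ℕ) : ℤ) := by omega
          have hdz : (d : ℤ) = (((c + d) / 2 : ℕ) : ℤ) - (((c - d) / 2 : ℕ) : ℤ) := by omega
          rw [hcz, hdz] at heq
          have h4 : 4 * ((((c - d) / 2 : ℕ) : ℤ) ^ 2 + (((c + d) / 2 : ℕ) : ℤ) ^ 2 +
              ((((c + d) / 2 : ℕ) : ℤ) + (b : ℤ)) ^ 2 +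
              ((((c + d) / 2 : ℕ) : ℤ) + (b : ℤ) + (a : ℤ)) ^ 2) = 4 * (m : ℤ) := by
            linear_combination heq
          have h5 : 4 * (((c - d) / 2) ^ 2 + ((c + d) / 2) ^ 2 + ((c + d) / 2 + b) ^ 2 +
              ((c + d) / 2 + b + a) ^ 2) = 4 * m := by exact_mod_cast h4
          exact Nat.eq_of_mul_eq_mul_left (by norm_num) h5
        · have e1 : (c + d) / 2 + b + a - ((c + d) / 2 + b) = a := by omega
          have e2 : (c + d) / 2 + b - (c + d) / 2 = b := by omega
          have e3 : (c + d) / 2 + (c - d) / 2 = c := by omega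
          have e4 : (c + d) / 2 - (c - d) / 2 = d := by omega
          rw [phi1_mk, e1, e2, e3, e4]
    · rintro (⟨⟨x, y, z, v⟩, hmem, hq⟩ | ⟨⟨x, y, z, v⟩, hmem, hq⟩) <;>
      · simp only [phi1_mk, phi2_mk, Prod.mk.injEq] at hq
        obtain ⟨rfl, rfl, rfl, rfl⟩ := hq
        rw [L4set_mem] at hmem
        obtain ⟨hx, hxy, hyz, hzv, hsum⟩ := hmem
        have e1 : ((v - z : ℕ) : ℤ) = (v : ℤ) - (z : ℤ) := by omega
        have e2 : ((z - y : ℕ) : ℤ) = (z : ℤ) - (y : ℤ) := by omega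
        have e3 : ((y - x : ℕ) : ℤ) = (y : ℤ) - (x : ℤ) := by omega
        have hz : ((x : ℤ)) ^ 2 + (y : ℤ) ^ 2 + (z : ℤ) ^ 2 + (v : ℤ) ^ 2 = (m : ℤ) := by
          exact_mod_cast hsum
        refine ⟨by omega, by omega, by omega, by omega, by omega, by omega, ?_⟩
        push_cast [e1, e2, e3, hm4]
        linear_combination 4 * hz
  rw [himg]
  have hinj1 : Set.InjOn phi1 (L4set m) := by
    rintro ⟨x, y, z, v⟩ hp ⟨x', y', z', v'⟩ hp' hEq
    rw [L4set_mem] at hp hp'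
    rw [phi1_mk, phi1_mk, Prod.mk.injEq, Prod.mk.injEq, Prod.mk.injEq] at hEq
    rw [Prod.mk.injEq, Prod.mk.injEq, Prod.mk.injEq]
    omega
  have hinj2 : Set.InjOn phi2 (L4set m) := by
    rintro ⟨x, y, z, v⟩ hp ⟨x', y', z', v'⟩ hp' hEq
    rw [L4set_mem] at hp hp'
    rw [phi2_mk, phi2_mk, Prod.mk.injEq, Prod.mk.injEq, Prod.mk.injEq] at hEq
    rw [Prod.mk.injEq, Prod.mk.injEq, Prod.mk.injEq]
    omega
  have hdisj : Disjoint (phi1 '' L4set m) (phi2 '' L4set m) := by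
    rw [Set.disjoint_left]
    rintro q ⟨⟨x, y, z, v⟩, hp, rfl⟩ ⟨⟨x', y', z', v'⟩, hp', hq⟩
    rw [L4set_mem] at hp hp'
    rw [phi1_mk, phi2_mk, Prod.mk.injEq, Prod.mk.injEq, Prod.mk.injEq] at hq
    omega
  rw [Set.ncard_union_eq hdisj (hSfin.image _) (hSfin.image _),
    Set.ncard_image_of_injOn hinj1, Set.ncard_image_of_injOn hinj2, two_mul]
end
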